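/- Irrelevance of variables, program part (Lemma 1(2) of the paper): let π be a DL-PA∥ program, P ⊆ ℙ with vars(π) ⊆ P, and let M₁, M₁' be models with M₁∩P = M₁'∩P. If M₁⟦π⟧M₂ then M₁'⟦π⟧M₂', where M₂' is the unique model with M₂'∩P = M₂∩P and M₂'∩(ℙ∖P) = M₁'∩(ℙ∖P). -/
import Mathlib


set_option maxHeartbeats 1000000

/-- Propositional variables. -/
abbrev PVar := ℕ

/-- A DL-PA∥ model: readable variables `R`, writable variables `W`,
valuation `V`, with writability implying readability. -/
@[ext]
structure Model where
  R : Set PVar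
  W : Set PVar
  V : Set PVar
  sub : W ⊆ R

mutual
/-- Formulas of DL-PA∥. -/
inductive Formula : Type where
  | atom : PVar → Formula
  | top  : Formula
  | neg  : Formula → Formula
  | or   : Formula → Formula → Formula
  | dia  : Program → Formula → Formula
/-- Programs of DL-PA∥. -/
inductive Program : Type where
  | assignT : PVar → Program   -- +p
  | assignF : PVar → Program   -- −p
  | addR : PVar → Program      -- +r p
  | remR : PVar → Program      -- −r p
  | addW : PVar → Program      -- +w p
  | remW : PVar → Program      -- −w p
  | testEx : Formula → Program -- exogenous test φ?
  | testEn : Formula → Program -- endogenous test φ?ⁿ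
  | seq : Program → Program → Program
  | choice : Program → Program → Program
  | star : Program → Program
  | par : Program → Program → Program
end

/-- RW-disjointness. -/
def RWdisjoint (M1 M2 : Model) : Prop :=
  M1.W ∩ M2.R = ∅ ∧ M2.W ∩ M1.R = ∅

/-- Split relation `M ◁ (M₁,M₂)`. -/
def SplitRel (M M1 M2 : Model) : Prop :=
  RWdisjoint M1 M2 ∧ M.R = M1.R ∪ M2.R ∧ M.W = M1.W ∪ M2.W ∧ M.V = M1.V ∧ M.V = M2.V

/-- Merge relation `M ▷ (M₁,M₂)`. -/
def MergeRel (M M1 M2 : Model) : Prop :=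
  RWdisjoint M1 M2 ∧ M.R = M1.R ∪ M2.R ∧ M.W = M1.W ∪ M2.W ∧
  M1.V \ M.W = M2.V \ M.W ∧ M.V = (M1.V ∩ M1.W) ∪ (M2.V ∩ M2.W) ∪ (M1.V ∩ M2.V)

/-- Indistinguishability `M ∼ M'`. -/
def Indist (M M' : Model) : Prop :=
  M.R = M'.R ∧ M.W = M'.W ∧ M.V ∩ M.R = M'.V ∩ M'.R

mutual
/-- Truth of a formula in a model. -/
def Sat : Model → Formula → Prop
  | M, .atom p => p ∈ M.V
  | _, .top => True
  | M, .neg φ => ¬ Sat M φ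
  | M, .or φ ψ => Sat M φ ∨ Sat M ψ
  | M, .dia π φ => ∃ M', Interp π M M' ∧ Sat M' φ
/-- Interpretation of programs as relations between models. -/
def Interp : Program → Model → Model → Prop
  | .assignT p, M, M' => M'.R = M.R ∧ M'.W = M.W ∧ M'.V = M.V ∪ {p} ∧ p ∈ M.W
  | .assignF p, M, M' => M'.R = M.R ∧ M'.W = M.W ∧ M'.V = M.V \ {p} ∧ p ∈ M.W
  | .addR p, M, M' => M'.R = M.R ∪ {p} ∧ M'.W = M.W ∧ M'.V = M.V
  | .remR p, M, M' => M'.R = M.R \ {p} ∧ M'.W = M.W \ {p} ∧ M'.V = M.V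
  | .addW p, M, M' => M'.R = M.R ∪ {p} ∧ M'.W = M.W ∪ {p} ∧ M'.V = M.V
  | .remW p, M, M' => M'.R = M.R ∧ M'.W = M.W \ {p} ∧ M'.V = M.V
  | .testEx φ, M, M' => M = M' ∧ Sat M φ
  | .testEn φ, M, M' => M = M' ∧ ∀ M'', Indist M'' M → Sat M'' φ
  | .seq π1 π2, M, M' => ∃ M'', Interp π1 M M'' ∧ Interp π2 M'' M'
  | .choice π1 π2, M, M' => Interp π1 M M' ∨ Interp π2 M M'
  | .star π, M, M' => Relation.ReflTransGen (fun A B => Interp π A B) M M'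
  | .par π1 π2, M, M' => ∃ M1 M2 M1' M2',
      SplitRel M M1 M2 ∧ MergeRel M' M1' M2' ∧
      Interp π1 M1 M1' ∧ Interp π2 M2 M2' ∧
      M1.R = M1'.R ∧ M1.W = M1'.W ∧ M1.V \ M1.W = M1'.V \ M1'.W ∧
      M2.R = M2'.R ∧ M2.W = M2'.W ∧ M2.V \ M2.W = M2'.V \ M2'.W
end

mutual
/-- Propositional variables occurring in a formula. -/
def varsF : Formula → Finset PVar
  | .atom p => {p}
  | .top => ∅
  | .neg φ => varsF φ
  | .or φ ψ => varsF φ ∪ varsF ψ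
  | .dia π φ => varsP π ∪ varsF φ
/-- Propositional variables occurring in a program. -/
def varsP : Program → Finset PVar
  | .assignT p => {p}
  | .assignF p => {p}
  | .addR p => {p}
  | .remR p => {p}
  | .addW p => {p}
  | .remW p => {p}
  | .testEx φ => varsF φ
  | .testEn φ => varsF φ
  | .seq π1 π2 => varsP π1 ∪ varsP π2
  | .choice π1 π2 => varsP π1 ∪ varsP π2
  | .star π => varsP π
  | .par π1 π2 => varsP π1 ∪ varsP π2
end

/-- `⊥`. -/
def botF : Formula := .neg .top
/-- Conjunction. -/
def andF (φ ψ : Formula) : Formula := .neg (.or (.neg φ) (.neg ψ))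
/-- Implication. -/
def impF (φ ψ : Formula) : Formula := .or (.neg φ) ψ
/-- Bi-implication. -/
def iffF (φ ψ : Formula) : Formula := andF (impF φ ψ) (impF ψ φ)
/-- `[π]φ`. -/
def boxF (π : Program) (φ : Formula) : Formula := .neg (.dia π (.neg φ))
/-- `w(p)`: `p` is writable. -/
def wF (p : PVar) : Formula := .dia (.assignT p) .top
/-- `r(p)`: `p` is readable. -/
def rF (p : PVar) : Formula :=
  .or (.dia (.testEn (.atom p)) .top) (.dia (.testEn (.neg (.atom p))) .top)

/-- Restriction `M ∩ P` of a model to a set of variables. -/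
def interModel (M : Model) (P : Set PVar) : Model :=
  ⟨M.R ∩ P, M.W ∩ P, M.V ∩ P, Set.inter_subset_inter M.sub (subset_refl P)⟩

/-- A formula is valid iff true in every model. -/
def Valid (φ : Formula) : Prop := ∀ M : Model, Sat M φ

/-! ## Auxiliary lemmas -/

lemma restrict_iff {A B : Model} {P : Set PVar} :
    interModel A P = interModel B P ↔
      (A.R ∩ P = B.R ∩ P ∧ A.W ∩ P = B.W ∩ P ∧ A.V ∩ P = B.V ∩ P) := by
  constructor
  · intro h
    exact ⟨congrArg Model.R h, congrArg Model.W h, congrArg Model.V h⟩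
  · rintro ⟨h1, h2, h3⟩
    exact Model.ext h1 h2 h3

lemma model_eq_of_restrict {A B : Model} {P : Set PVar}
    (h1 : interModel A P = interModel B P)
    (h2 : interModel A Pᶜ = interModel B Pᶜ) : A = B := by
  obtain ⟨r1, w1, v1⟩ := restrict_iff.mp h1
  obtain ⟨r2, w2, v2⟩ := restrict_iff.mp h2
  apply Model.ext <;>
  · ext x
    by_cases hx : x ∈ P
    · have a1 := Set.ext_iff.mp r1 x; have a2 := Set.ext_iff.mp w1 x
      have a3 := Set.ext_iff.mp v1 x
      simp only [Set.mem_inter_iff] at a1 a2 a3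
      tauto
    · have a1 := Set.ext_iff.mp r2 x; have a2 := Set.ext_iff.mp w2 x
      have a3 := Set.ext_iff.mp v2 x
      simp only [Set.mem_inter_iff, Set.mem_compl_iff] at a1 a2 a3
      tauto

/-- Patch: take `A` on `P` and `B` outside `P`. -/
def patch (P : Set PVar) (A B : Model) : Model :=
  ⟨(A.R ∩ P) ∪ (B.R ∩ Pᶜ), (A.W ∩ P) ∪ (B.W ∩ Pᶜ), (A.V ∩ P) ∪ (B.V ∩ Pᶜ),
    Set.union_subset_union (Set.inter_subset_inter A.sub le_rfl)
      (Set.inter_subset_inter B.sub le_rfl)⟩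

lemma patch_int_P (P : Set PVar) (A B : Model) :
    interModel (patch P A B) P = interModel A P := by
  apply restrict_iff.mpr
  refine ⟨?_, ?_, ?_⟩ <;>
  · ext x; simp [patch, Set.mem_inter_iff, Set.mem_union, Set.mem_compl_iff]; tauto

lemma patch_int_compl (P : Set PVar) (A B : Model) :
    interModel (patch P A B) Pᶜ = interModel B Pᶜ := by
  apply restrict_iff.mpr
  refine ⟨?_, ?_, ?_⟩ <;>
  · ext x; simp [patch, Set.mem_inter_iff, Set.mem_union, Set.mem_compl_iff]; tauto

lemma patch_id {s s' P : Set PVar} (h1 : s ∩ P = s' ∩ P) :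
    (s ∩ P) ∪ (s' ∩ Pᶜ) = s' := by rw [h1, Set.inter_union_compl]

lemma patch_union {p : PVar} {s s' P : Set PVar} (hp : p ∈ P) (h1 : s ∩ P = s' ∩ P) :
    ((s ∪ {p}) ∩ P) ∪ (s' ∩ Pᶜ) = s' ∪ {p} := by
  ext x
  have hx1 := Set.ext_iff.mp h1 x
  simp only [Set.mem_inter_iff, Set.mem_union, Set.mem_compl_iff,
    Set.mem_singleton_iff] at hx1 ⊢
  by_cases hx : x ∈ P
  · tauto
  · have hxp : x ≠ p := fun e => hx (e ▸ hp)
    tauto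

lemma patch_diff {p : PVar} {s s' P : Set PVar} (hp : p ∈ P) (h1 : s ∩ P = s' ∩ P) :
    ((s \ {p}) ∩ P) ∪ (s' ∩ Pᶜ) = s' \ {p} := by
  ext x
  have hx1 := Set.ext_iff.mp h1 x
  simp only [Set.mem_inter_iff, Set.mem_union, Set.mem_compl_iff, Set.mem_diff,
    Set.mem_singleton_iff] at hx1 ⊢
  by_cases hx : x ∈ P
  · tauto
  · have hxp : x ≠ p := fun e => hx (e ▸ hp)
    tauto

lemma set_eq_of_parts {s t P : Set PVar} (h1 : s ∩ P = t ∩ P) (h2 : s ∩ Pᶜ = t ∩ Pᶜ) :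
    s = t := by
  rw [← Set.inter_union_compl s P, ← Set.inter_union_compl t P, h1, h2]

/-- Left component of the transported split. -/
def parA (P : Set PVar) (A M1' : Model) : Model :=
  ⟨(A.R ∩ P) ∪ (M1'.R ∩ Pᶜ), (A.W ∩ P) ∪ (M1'.W ∩ Pᶜ), M1'.V,
    Set.union_subset_union (Set.inter_subset_inter A.sub le_rfl)
      (Set.inter_subset_inter M1'.sub le_rfl)⟩

/-- Right component of the transported split. -/
def parB (P : Set PVar) (B M1' : Model) : Model :=
  ⟨B.R ∩ P, B.W ∩ P, M1'.V, Set.inter_subset_inter B.sub le_rfl⟩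

/-- The merge of two RW-compatible models. -/
def mergeM (A1 B1 : Model) : Model :=
  ⟨A1.R ∪ B1.R, A1.W ∪ B1.W,
    (A1.V ∩ A1.W) ∪ (B1.V ∩ B1.W) ∪ (A1.V ∩ B1.V),
    Set.union_subset_union A1.sub B1.sub⟩

lemma diff_inter (s t u : Set PVar) : (s \ t) ∩ u = (s ∩ u) \ (t ∩ u) := by
  ext x; simp only [Set.mem_diff, Set.mem_inter_iff]; tauto

lemma merge_inter (v1 w1 v2 w2 u : Set PVar) :
    ((v1 ∩ w1) ∪ (v2 ∩ w2) ∪ (v1 ∩ v2)) ∩ u =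
      ((v1 ∩ u) ∩ (w1 ∩ u)) ∪ ((v2 ∩ u) ∩ (w2 ∩ u)) ∪ ((v1 ∩ u) ∩ (v2 ∩ u)) := by
  ext x; simp only [Set.mem_union, Set.mem_inter_iff]; tauto

lemma par_A0 (P : Set PVar) (M1 M1' A B : Model)
    (h : interModel M1 P = interModel M1' P) (hsp : SplitRel M1 A B) :
    interModel A P = interModel (parA P A M1') P := by
  obtain ⟨_, v1⟩ : True ∧ M1.V ∩ P = M1'.V ∩ P := ⟨trivial, (restrict_iff.mp h).2.2⟩
  obtain ⟨_, _, _, hVA, _⟩ := hsp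
  apply restrict_iff.mpr
  refine ⟨?_, ?_, ?_⟩
  · show A.R ∩ P = ((A.R ∩ P) ∪ (M1'.R ∩ Pᶜ)) ∩ P
    ext x; simp only [Set.mem_inter_iff, Set.mem_union, Set.mem_compl_iff]; tauto
  · show A.W ∩ P = ((A.W ∩ P) ∪ (M1'.W ∩ Pᶜ)) ∩ P
    ext x; simp only [Set.mem_inter_iff, Set.mem_union, Set.mem_compl_iff]; tauto
  · show A.V ∩ P = M1'.V ∩ P
    rw [← v1, hVA]

lemma par_B0 (P : Set PVar) (M1 M1' A B : Model)
    (h : interModel M1 P = interModel M1' P) (hsp : SplitRel M1 A B) :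
    interModel B P = interModel (parB P B M1') P := by
  have v1 : M1.V ∩ P = M1'.V ∩ P := (restrict_iff.mp h).2.2
  obtain ⟨_, _, _, _, hVB⟩ := hsp
  apply restrict_iff.mpr
  refine ⟨?_, ?_, ?_⟩
  · show B.R ∩ P = (B.R ∩ P) ∩ P
    rw [Set.inter_assoc, Set.inter_self]
  · show B.W ∩ P = (B.W ∩ P) ∩ P
    rw [Set.inter_assoc, Set.inter_self]
  · show B.V ∩ P = M1'.V ∩ P
    rw [← v1, hVB]

set_option maxHeartbeats 1000000 in
theorem par_transport (P : Set PVar) (M1 M1' M2 A B A' B' A1 B1 : Model)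
    (h : interModel M1 P = interModel M1' P)
    (hsp : SplitRel M1 A B) (hmg : MergeRel M2 A' B')
    (fAR : A.R = A'.R) (fAW : A.W = A'.W) (fAV : A.V \ A.W = A'.V \ A'.W)
    (fBR : B.R = B'.R) (fBW : B.W = B'.W) (fBV : B.V \ B.W = B'.V \ B'.W)
    (hA1P : interModel A1 P = interModel A' P)
    (hA1C : interModel A1 Pᶜ = interModel (parA P A M1') Pᶜ)
    (hB1P : interModel B1 P = interModel B' P)
    (hB1C : interModel B1 Pᶜ = interModel (parB P B M1') Pᶜ) :
    SplitRel M1' (parA P A M1') (parB P B M1') ∧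
    MergeRel (mergeM A1 B1) A1 B1 ∧
    ((parA P A M1').R = A1.R ∧ (parA P A M1').W = A1.W ∧
      (parA P A M1').V \ (parA P A M1').W = A1.V \ A1.W) ∧
    ((parB P B M1').R = B1.R ∧ (parB P B M1').W = B1.W ∧
      (parB P B M1').V \ (parB P B M1').W = B1.V \ B1.W) ∧
    interModel (mergeM A1 B1) P = interModel M2 P ∧
    interModel (mergeM A1 B1) Pᶜ = interModel M1' Pᶜ := by
  obtain ⟨r1, w1, v1⟩ := restrict_iff.mp h
  obtain ⟨⟨d1, d2⟩, hRu, hWu, hVA, hVB⟩ := hsp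
  obtain ⟨⟨e1, e2⟩, mR, mW, mside, mV⟩ := hmg
  obtain ⟨pA1R, pA1W, pA1V⟩ := restrict_iff.mp hA1P
  obtain ⟨cA1R, cA1W, cA1V⟩ := restrict_iff.mp hA1C
  obtain ⟨pB1R, pB1W, pB1V⟩ := restrict_iff.mp hB1P
  obtain ⟨cB1R, cB1W, cB1V⟩ := restrict_iff.mp hB1C
  have d1' := Set.eq_empty_iff_forall_notMem.mp d1
  have d2' := Set.eq_empty_iff_forall_notMem.mp d2
  -- component facts for parA / parB on P
  have pARP : (parA P A M1').R ∩ P = A.R ∩ P := by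
    show ((A.R ∩ P) ∪ (M1'.R ∩ Pᶜ)) ∩ P = A.R ∩ P
    ext x; simp only [Set.mem_inter_iff, Set.mem_union, Set.mem_compl_iff]; tauto
  have pAWP : (parA P A M1').W ∩ P = A.W ∩ P := by
    show ((A.W ∩ P) ∪ (M1'.W ∩ Pᶜ)) ∩ P = A.W ∩ P
    ext x; simp only [Set.mem_inter_iff, Set.mem_union, Set.mem_compl_iff]; tauto
  have pAVP : (parA P A M1').V ∩ P = A.V ∩ P := by
    show M1'.V ∩ P = A.V ∩ P
    rw [← v1, hVA]
  have pBRP : (parB P B M1').R ∩ P = B.R ∩ P := by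
    show (B.R ∩ P) ∩ P = B.R ∩ P
    rw [Set.inter_assoc, Set.inter_self]
  have pBWP : (parB P B M1').W ∩ P = B.W ∩ P := by
    show (B.W ∩ P) ∩ P = B.W ∩ P
    rw [Set.inter_assoc, Set.inter_self]
  have pBVP : (parB P B M1').V ∩ P = B.V ∩ P := by
    show M1'.V ∩ P = B.V ∩ P
    rw [← v1, hVB]
  -- full equalities of the output frames
  have hA1R : A1.R = (parA P A M1').R :=
    set_eq_of_parts (by rw [pA1R, ← fAR, ← pARP]) cA1R
  have hA1W : A1.W = (parA P A M1').W :=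
    set_eq_of_parts (by rw [pA1W, ← fAW, ← pAWP]) cA1W
  have hB1R : B1.R = (parB P B M1').R :=
    set_eq_of_parts (by rw [pB1R, ← fBR, ← pBRP]) cB1R
  have hB1W : B1.W = (parB P B M1').W :=
    set_eq_of_parts (by rw [pB1W, ← fBW, ← pBWP]) cB1W
  -- totals
  have hRtot0 : (parA P A M1').R ∪ (parB P B M1').R = M1'.R := by
    ext x
    have a1 := Set.ext_iff.mp r1 x
    have a2 := Set.ext_iff.mp hRu x
    simp only [parA, parB, Set.mem_inter_iff, Set.mem_union, Set.mem_compl_iff] at a1 a2 ⊢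
    by_cases hx : x ∈ P <;> tauto
  have hWtot0 : (parA P A M1').W ∪ (parB P B M1').W = M1'.W := by
    ext x
    have a1 := Set.ext_iff.mp w1 x
    have a2 := Set.ext_iff.mp hWu x
    simp only [parA, parB, Set.mem_inter_iff, Set.mem_union, Set.mem_compl_iff] at a1 a2 ⊢
    by_cases hx : x ∈ P <;> tauto
  have hRtot : A1.R ∪ B1.R = M1'.R := by rw [hA1R, hB1R]; exact hRtot0
  have hWtot : A1.W ∪ B1.W = M1'.W := by rw [hA1W, hB1W]; exact hWtot0
  -- disjointness
  have pdisj1 : (parA P A M1').W ∩ (parB P B M1').R = ∅ := by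
    ext x
    have a1 := d1' x
    simp only [parA, parB, Set.mem_inter_iff, Set.mem_union, Set.mem_compl_iff,
      Set.mem_empty_iff_false, iff_false, not_and] at a1 ⊢
    tauto
  have pdisj2 : (parB P B M1').W ∩ (parA P A M1').R = ∅ := by
    ext x
    have a1 := d2' x
    simp only [parA, parB, Set.mem_inter_iff, Set.mem_union, Set.mem_compl_iff,
      Set.mem_empty_iff_false, iff_false, not_and] at a1 ⊢
    tauto
  -- V-diff frames
  have hA1Vd : (parA P A M1').V \ (parA P A M1').W = A1.V \ A1.W := by
    apply set_eq_of_parts (P := P)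
    · rw [diff_inter, pAVP, pAWP, ← diff_inter, fAV, diff_inter, ← pA1V, ← pA1W,
        ← diff_inter]
    · rw [diff_inter, diff_inter, cA1V, cA1W]
  have hB1Vd : (parB P B M1').V \ (parB P B M1').W = B1.V \ B1.W := by
    apply set_eq_of_parts (P := P)
    · rw [diff_inter, pBVP, pBWP, ← diff_inter, fBV, diff_inter, ← pB1V, ← pB1W,
        ← diff_inter]
    · rw [diff_inter, diff_inter, cB1V, cB1W]
  have eW : M1'.W ∩ P = M2.W ∩ P := by
    rw [← w1, hWu, fAW, fBW, ← mW]
  have hside : A1.V \ (A1.W ∪ B1.W) = B1.V \ (A1.W ∪ B1.W) := by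
    rw [hWtot]
    apply set_eq_of_parts (P := P)
    · rw [diff_inter, pA1V, eW, ← diff_inter, mside, diff_inter, ← eW, ← pB1V,
        ← diff_inter]
    · rw [diff_inter, diff_inter, cA1V, cB1V]
      rfl
  refine ⟨⟨⟨pdisj1, pdisj2⟩, hRtot0.symm, hWtot0.symm, rfl, rfl⟩,
    ⟨⟨by rw [hA1W, hB1R]; exact pdisj1, by rw [hB1W, hA1R]; exact pdisj2⟩,
      rfl, rfl, hside, rfl⟩,
    ⟨hA1R.symm, hA1W.symm, hA1Vd⟩, ⟨hB1R.symm, hB1W.symm, hB1Vd⟩, ?_, ?_⟩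
  · apply restrict_iff.mpr
    refine ⟨?_, ?_, ?_⟩
    · show (A1.R ∪ B1.R) ∩ P = M2.R ∩ P
      rw [hRtot, ← r1, hRu, fAR, fBR, ← mR]
    · show (A1.W ∪ B1.W) ∩ P = M2.W ∩ P
      rw [hWtot, ← w1, hWu, fAW, fBW, ← mW]
    · show ((A1.V ∩ A1.W) ∪ (B1.V ∩ B1.W) ∪ (A1.V ∩ B1.V)) ∩ P = M2.V ∩ P
      rw [mV, merge_inter, merge_inter, pA1V, pA1W, pB1V, pB1W]
  · apply restrict_iff.mpr
    refine ⟨?_, ?_, ?_⟩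
    · show (A1.R ∪ B1.R) ∩ Pᶜ = M1'.R ∩ Pᶜ
      rw [hRtot]
    · show (A1.W ∪ B1.W) ∩ Pᶜ = M1'.W ∩ Pᶜ
      rw [hWtot]
    · show ((A1.V ∩ A1.W) ∪ (B1.V ∩ B1.W) ∪ (A1.V ∩ B1.V)) ∩ Pᶜ = M1'.V ∩ Pᶜ
      rw [merge_inter, cA1V, cA1W, cB1V, cB1W]
      ext x
      simp only [parA, parB, Set.mem_inter_iff, Set.mem_union, Set.mem_compl_iff]
      tauto

set_option maxHeartbeats 8000000 in
mutual
theorem lemF (P : Set PVar) (φ : Formula) (hv : ↑(varsF φ) ⊆ P)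
    (M M' : Model) (h : interModel M P = interModel M' P) (hs : Sat M φ) : Sat M' φ := by
  match φ with
  | .atom p =>
      have hp : p ∈ P := hv (by simp [varsF])
      have hV := restrict_iff.mp h |>.2.2
      have := Set.ext_iff.mp hV p
      simp only [Set.mem_inter_iff] at this
      simp only [Sat] at hs ⊢
      tauto
  | .top => trivial
  | .neg ψ =>
      simp only [Sat] at hs ⊢
      intro hc
      exact hs (lemF P ψ hv M' M h.symm hc)
  | .or ψ χ =>
      simp only [Sat] at hs ⊢
      have h1 : ↑(varsF ψ) ⊆ P := by
        refine subset_trans ?_ hv; simp [varsF]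
      have h2 : ↑(varsF χ) ⊆ P := by
        refine subset_trans ?_ hv; simp [varsF]
      rcases hs with hs | hs
      · exact Or.inl (lemF P ψ h1 M M' h hs)
      · exact Or.inr (lemF P χ h2 M M' h hs)
  | .dia π ψ =>
      simp only [Sat] at hs ⊢
      have h1 : ↑(varsP π) ⊆ P := by
        refine subset_trans ?_ hv; simp [varsF]
      have h2 : ↑(varsF ψ) ⊆ P := by
        refine subset_trans ?_ hv; simp [varsF]
      obtain ⟨N, hN, hNs⟩ := hs
      obtain ⟨N', hN', hNP, _⟩ := lemP P π h1 M M' N h hN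
      exact ⟨N', hN', lemF P ψ h2 N N' hNP.symm hNs⟩
termination_by sizeOf φ

theorem lemP (P : Set PVar) (π : Program) (hv : ↑(varsP π) ⊆ P)
    (M1 M1' M2 : Model) (h : interModel M1 P = interModel M1' P)
    (hexec : Interp π M1 M2) :
    ∃ M2', Interp π M1' M2' ∧ interModel M2' P = interModel M2 P ∧
      interModel M2' Pᶜ = interModel M1' Pᶜ := by
  match π with
  | .assignT p =>
      have hp : p ∈ P := hv (by simp [varsP])
      obtain ⟨hR, hW, hV, hw⟩ := hexec
      obtain ⟨r1, w1, v1⟩ := restrict_iff.mp h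
      refine ⟨patch P M2 M1', ?_, patch_int_P .., patch_int_compl ..⟩
      simp only [Interp, patch]
      refine ⟨?_, ?_, ?_, ?_⟩
      · rw [hR]; exact patch_id r1
      · rw [hW]; exact patch_id w1
      · rw [hV]; exact patch_union hp v1
      · have := Set.ext_iff.mp w1 p
        simp only [Set.mem_inter_iff] at this
        tauto
  | .assignF p =>
      have hp : p ∈ P := hv (by simp [varsP])
      obtain ⟨hR, hW, hV, hw⟩ := hexec
      obtain ⟨r1, w1, v1⟩ := restrict_iff.mp h
      refine ⟨patch P M2 M1', ?_, patch_int_P .., patch_int_compl ..⟩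
      simp only [Interp, patch]
      refine ⟨?_, ?_, ?_, ?_⟩
      · rw [hR]; exact patch_id r1
      · rw [hW]; exact patch_id w1
      · rw [hV]; exact patch_diff hp v1
      · have := Set.ext_iff.mp w1 p
        simp only [Set.mem_inter_iff] at this
        tauto
  | .addR p =>
      have hp : p ∈ P := hv (by simp [varsP])
      obtain ⟨hR, hW, hV⟩ := hexec
      obtain ⟨r1, w1, v1⟩ := restrict_iff.mp h
      refine ⟨patch P M2 M1', ?_, patch_int_P .., patch_int_compl ..⟩
      simp only [Interp, patch]
      exact ⟨by rw [hR]; exact patch_union hp r1, by rw [hW]; exact patch_id w1,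
        by rw [hV]; exact patch_id v1⟩
  | .remR p =>
      have hp : p ∈ P := hv (by simp [varsP])
      obtain ⟨hR, hW, hV⟩ := hexec
      obtain ⟨r1, w1, v1⟩ := restrict_iff.mp h
      refine ⟨patch P M2 M1', ?_, patch_int_P .., patch_int_compl ..⟩
      simp only [Interp, patch]
      exact ⟨by rw [hR]; exact patch_diff hp r1, by rw [hW]; exact patch_diff hp w1,
        by rw [hV]; exact patch_id v1⟩
  | .addW p =>
      have hp : p ∈ P := hv (by simp [varsP])
      obtain ⟨hR, hW, hV⟩ := hexec
      obtain ⟨r1, w1, v1⟩ := restrict_iff.mp h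
      refine ⟨patch P M2 M1', ?_, patch_int_P .., patch_int_compl ..⟩
      simp only [Interp, patch]
      exact ⟨by rw [hR]; exact patch_union hp r1, by rw [hW]; exact patch_union hp w1,
        by rw [hV]; exact patch_id v1⟩
  | .remW p =>
      have hp : p ∈ P := hv (by simp [varsP])
      obtain ⟨hR, hW, hV⟩ := hexec
      obtain ⟨r1, w1, v1⟩ := restrict_iff.mp h
      refine ⟨patch P M2 M1', ?_, patch_int_P .., patch_int_compl ..⟩
      simp only [Interp, patch]
      exact ⟨by rw [hR]; exact patch_id r1, by rw [hW]; exact patch_diff hp w1,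
        by rw [hV]; exact patch_id v1⟩
  | .testEx ψ =>
      obtain ⟨heq, hsat⟩ := hexec
      refine ⟨M1', ⟨rfl, lemF P ψ hv M1 M1' h hsat⟩, ?_, rfl⟩
      rw [← heq]; exact h.symm
  | .testEn ψ =>
      obtain ⟨heq, hall⟩ := hexec
      obtain ⟨r1, w1, v1⟩ := restrict_iff.mp h
      refine ⟨M1', ⟨rfl, ?_⟩, by rw [← heq]; exact h.symm, rfl⟩
      intro M'' hind
      obtain ⟨hiR, hiW, hiV⟩ := hind
      refine lemF P ψ hv ⟨M1.R, M1.W, (M''.V ∩ P) ∪ (M1.V ∩ Pᶜ), M1.sub⟩ M'' ?_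
        (hall _ ⟨rfl, rfl, ?_⟩)
      · apply restrict_iff.mpr
        refine ⟨by rw [hiR]; exact r1, by rw [hiW]; exact w1, ?_⟩
        ext x
        simp only [Set.mem_inter_iff, Set.mem_union, Set.mem_compl_iff]
        tauto
      · ext x
        have a1 := Set.ext_iff.mp r1 x
        have a2 := Set.ext_iff.mp v1 x
        have a3 := Set.ext_iff.mp hiV x
        have a4 := Set.ext_iff.mp hiR x
        simp only [Set.mem_inter_iff, Set.mem_union, Set.mem_compl_iff] at a1 a2 a3 a4 ⊢
        by_cases hx : x ∈ P
        · tauto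
        · tauto
  | .seq π1 π2 =>
      have hv1 : ↑(varsP π1) ⊆ P := by refine subset_trans ?_ hv; simp [varsP]
      have hv2 : ↑(varsP π2) ⊆ P := by refine subset_trans ?_ hv; simp [varsP]
      obtain ⟨Mm, h1e, h2e⟩ := hexec
      obtain ⟨N, hN, hNP, hNC⟩ := lemP P π1 hv1 M1 M1' Mm h h1e
      obtain ⟨N2, hN2, hN2P, hN2C⟩ := lemP P π2 hv2 Mm N M2 hNP.symm h2e
      exact ⟨N2, ⟨N, hN, hN2⟩, hN2P, hN2C.trans hNC⟩
  | .choice π1 π2 =>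
      have hv1 : ↑(varsP π1) ⊆ P := by refine subset_trans ?_ hv; simp [varsP]
      have hv2 : ↑(varsP π2) ⊆ P := by refine subset_trans ?_ hv; simp [varsP]
      rcases hexec with he | he
      · obtain ⟨N, hN, hNP, hNC⟩ := lemP P π1 hv1 M1 M1' M2 h he
        exact ⟨N, Or.inl hN, hNP, hNC⟩
      · obtain ⟨N, hN, hNP, hNC⟩ := lemP P π2 hv2 M1 M1' M2 h he
        exact ⟨N, Or.inr hN, hNP, hNC⟩
  | .star π1 =>
      have key : ∀ A B : Model, Relation.ReflTransGen (fun X Y => Interp π1 X Y) A B →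
          ∀ A' : Model, interModel A P = interModel A' P →
          ∃ B', Relation.ReflTransGen (fun X Y => Interp π1 X Y) A' B' ∧
            interModel B' P = interModel B P ∧ interModel B' Pᶜ = interModel A' Pᶜ := by
        intro A B hAB
        induction hAB with
        | refl => exact fun A' hA => ⟨A', .refl, hA.symm, rfl⟩
        | tail _ hcd ih =>
            intro A' hA
            obtain ⟨B', hrtg, hBP, hBC⟩ := ih A' hA
            obtain ⟨C', hC, hCP, hCC⟩ := lemP P π1 hv _ B' _ hBP.symm hcd
            exact ⟨C', hrtg.tail hC, hCP, hCC.trans hBC⟩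
      exact key M1 M2 hexec M1' h
  | .par π1 π2 =>
      have hv1 : ↑(varsP π1) ⊆ P := by refine subset_trans ?_ hv; simp [varsP]
      have hv2 : ↑(varsP π2) ⊆ P := by refine subset_trans ?_ hv; simp [varsP]
      obtain ⟨A, B, A', B', hsp, hmg, hi1, hi2, fAR, fAW, fAV, fBR, fBW, fBV⟩ := hexec
      obtain ⟨A1, hA1i, hA1P, hA1C⟩ :=
        lemP P π1 hv1 A (parA P A M1') A' (par_A0 P M1 M1' A B h hsp) hi1
      obtain ⟨B1, hB1i, hB1P, hB1C⟩ :=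
        lemP P π2 hv2 B (parB P B M1') B' (par_B0 P M1 M1' A B h hsp) hi2
      obtain ⟨s1, s2, ⟨t1, t2, t3⟩, ⟨u1, u2, u3⟩, s5, s6⟩ :=
        par_transport P M1 M1' M2 A B A' B' A1 B1 h hsp hmg
          fAR fAW fAV fBR fBW fBV hA1P hA1C hB1P hB1C
      exact ⟨mergeM A1 B1, ⟨parA P A M1', parB P B M1', A1, B1, s1, s2, hA1i, hB1i,
        t1, t2, t3, u1, u2, u3⟩, s5, s6⟩
termination_by sizeOf π
end

/-- Irrelevance of variables, program part (Lemma 1(2)): if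
`vars(π) ⊆ P`, `M₁ ∩ P = M₁' ∩ P` and `M₁⟦π⟧M₂`, then `M₁'⟦π⟧M₂'` for the
(unique) model `M₂'` with `M₂' ∩ P = M₂ ∩ P` and `M₂' ∩ (ℙ∖P) = M₁' ∩ (ℙ∖P)`. -/
theorem irrelevant_variables_program (π : Program) (P : Set PVar)
    (hP : ↑(varsP π) ⊆ P) (M1 M1' M2 : Model)
    (h : interModel M1 P = interModel M1' P)
    (hexec : Interp π M1 M2) :
    ∀ M2' : Model, interModel M2' P = interModel M2 P →
      interModel M2' Pᶜ = interModel M1' Pᶜ → Interp π M1' M2' := by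
  intro M2' h1 h2
  obtain ⟨N, hN, hNP, hNC⟩ := lemP P π hP M1 M1' M2 h hexec
  have hEq : M2' = N :=
    model_eq_of_restrict (h1.trans hNP.symm) (h2.trans hNC.symm)
  rw [hEq]
  exact hN
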